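/- arXiv:2007.11172 — 2 statements merged into one kernel-verified Lean document; each statement's English description precedes it below -/
import Mathlib

section
/- Let n = m, let x, y ∈ Δ_n be fully mixed (x_i > 0 and y_i > 0 for all i), let v > 0 and 0 < z < min_i min(v, v·y_i/(1 - x_i)). Define α_i = v + z·x_i/y_i and a_i = v - z·(1 - x_i)/y_i, and let A be the matrix with A_{ii} = a_i and A_{ij} = α_j for i ≠ j. Then x^T A = v·𝟙^T and A y = v·𝟙, i.e., (x, y) is a minimax equilibrium of A with value v. -/
theorem stmt_10 (n : ℕ) (x y : Fin n → ℝ)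
    (hx : x ∈ stdSimplex ℝ (Fin n)) (hy : y ∈ stdSimplex ℝ (Fin n))
    (hxpos : ∀ i, 0 < x i) (hypos : ∀ i, 0 < y i)
    (v : ℝ) (hv : 0 < v)
    (z : ℝ) (hz0 : 0 < z) (hzv : ∀ i, z < v ∧ z < v * y i / (1 - x i))
    (A : Matrix (Fin n) (Fin n) ℝ)
    (hA : ∀ i j, A i j = if i = j then v - z * (1 - x j) / y j else v + z * x j / y j) :
    (∀ j, ∑ i, x i * A i j = v) ∧ (∀ i, ∑ j, A i j * y j = v) := by
  have hxs : ∑ i, x i = 1 := hx.2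
  have hys : ∑ i, y i = 1 := hy.2
  constructor
  · intro j
    have hne : y j ≠ 0 := (hypos j).ne'
    have h1 : ∑ i ∈ Finset.univ \ {j}, x i = 1 - x j := by
      have := Finset.sum_eq_sum_sdiff_singleton_add (Finset.mem_univ j) x
      rw [hxs] at this; linarith
    rw [Finset.sum_eq_sum_sdiff_singleton_add (Finset.mem_univ j)
      (fun i => x i * A i j)]
    have h2 : ∑ i ∈ Finset.univ \ {j}, x i * A i j
        = (1 - x j) * (v + z * x j / y j) := by
      rw [← h1, Finset.sum_mul]
      apply Finset.sum_congr rfl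
      intro i hi
      have hij : i ≠ j := by simpa using (Finset.mem_sdiff.mp hi).2
      rw [hA i j, if_neg hij]
    rw [h2, hA j j, if_pos rfl]
    field_simp
    ring
  · intro i
    have hne : y i ≠ 0 := (hypos i).ne'
    rw [Finset.sum_eq_sum_sdiff_singleton_add (Finset.mem_univ i)
      (fun j => A i j * y j)]
    have h2 : ∑ j ∈ Finset.univ \ {i}, A i j * y j
        = ∑ j ∈ Finset.univ \ {i}, (v * y j + z * x j) := by
      apply Finset.sum_congr rfl
      intro j hj
      have hij : i ≠ j := fun h => by
        simp [h] at hj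
      have hnej : y j ≠ 0 := (hypos j).ne'
      rw [hA i j, if_neg hij]
      field_simp
    have h3 : ∑ j ∈ Finset.univ \ {i}, (v * y j + z * x j)
        = v * (1 - y i) + z * (1 - x i) := by
      rw [Finset.sum_add_distrib, ← Finset.mul_sum, ← Finset.mul_sum]
      have hxd : ∑ j ∈ Finset.univ \ {i}, x j = 1 - x i := by
        have := Finset.sum_eq_sum_sdiff_singleton_add (Finset.mem_univ i) x
        rw [hxs] at this; linarith
      have hyd : ∑ j ∈ Finset.univ \ {i}, y j = 1 - y i := by
        have := Finset.sum_eq_sum_sdiff_singleton_add (Finset.mem_univ i) y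
        rw [hys] at this; linarith
      rw [hxd, hyd]
    rw [h2, h3, hA i i, if_pos rfl]
    field_simp
    ring
end

section
/- Let k < n ≤ m, x ∈ Δ_n supported on the first k coordinates, y ∈ Δ_m with y_j > 0 exactly for j ≤ l where k ≤ l, v > 0, 0 < v₁ < v·ȳ where ȳ = ∑_{j=k+1}^{l} y_j, z = (v·ȳ - v₁)/∑_{i=1}^{k} y_i, β_i = v, α_i = v + x_i(v·ȳ - v₁)/y_i, a_i = α_i - (v·ȳ - v₁)/y_i for i ≤ k. Then the matrix A with block structure (top-left k×k: a_i on diagonal, α_j off-diagonal; top-right: row i constant β_i = v; bottom-left: row entries α_j - z; bottom-right: constant v) satisfies x^T A = v·𝟙^T on columns in the support of y and A y = v·𝟙, so (x, y) is a minimax equilibrium with value v. -/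
lemma aux_range (k N : ℕ) (hN : k ≤ N) (f : ℕ → ℝ) :
    ∑ j ∈ Finset.univ.filter (fun j : Fin N => (j : ℕ) < k), f j
      = ∑ j ∈ Finset.range k, f j := by
  rw [Finset.sum_filter]
  rw [Fin.sum_univ_eq_sum_range (fun i => if i < k then f i else 0) N]
  rw [← Finset.sum_filter]
  congr 1
  ext i
  simp only [Finset.mem_filter, Finset.mem_range]
  omega

theorem stmt_14 (n m k l : ℕ) (hkn : k < n) (hnm : n ≤ m) (hkl : k < l) (hlm : l ≤ m)
    (x : Fin n → ℝ) (y : Fin m → ℝ)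
    (hx : x ∈ stdSimplex ℝ (Fin n)) (hy : y ∈ stdSimplex ℝ (Fin m))
    (hxsupp : ∀ i : Fin n, 0 < x i ↔ (i : ℕ) < k)
    (hysupp : ∀ j : Fin m, 0 < y j ↔ (j : ℕ) < l)
    (v : ℝ) (hv : 0 < v)
    (ybar : ℝ) (hybar : ybar = ∑ j ∈ Finset.univ.filter (fun j : Fin m => k ≤ (j : ℕ)), y j)
    (v₁ : ℝ) (hv₁0 : 0 < v₁) (hv₁ : v₁ < v * ybar)
    (z : ℝ) (hz : z = (v * ybar - v₁) / ∑ j ∈ Finset.univ.filter (fun j : Fin m => (j : ℕ) < k), y j)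
    (α a : Fin m → ℝ)
    (hα : ∀ j : Fin m, ∀ hj : (j : ℕ) < k, α j = v + x ⟨(j : ℕ), by omega⟩ * (v * ybar - v₁) / y j)
    (ha : ∀ j : Fin m, (j : ℕ) < k → a j = α j - (v * ybar - v₁) / y j)
    (A : Matrix (Fin n) (Fin m) ℝ)
    (hA : ∀ i j, A i j =
      if (i : ℕ) < k then
        (if (j : ℕ) < k then (if (i : ℕ) = (j : ℕ) then a j else α j) else v)
      else
        (if (j : ℕ) < k then α j - z else v)) :
    (∀ j : Fin m, (j : ℕ) < l → ∑ i, x i * A i j = v) ∧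
    (∀ i : Fin n, ∑ j, A i j * y j = v) := by
  have hkm : k ≤ m := by omega
  have hx1 : ∑ i, x i = 1 := hx.2
  have hy1 : ∑ j, y j = 1 := hy.2
  have hxz : ∀ i : Fin n, ¬ (i : ℕ) < k → x i = 0 := by
    intro i hi
    by_contra h
    exact hi ((hxsupp i).1 (lt_of_le_of_ne (hx.1 i) (Ne.symm h)))
  have hyz : ∀ j : Fin m, ¬ (j : ℕ) < l → y j = 0 := by
    intro j hj
    by_contra h
    exact hj ((hysupp j).1 (lt_of_le_of_ne (hy.1 j) (Ne.symm h)))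
  have hyk : ∀ j : Fin m, (j : ℕ) < k → 0 < y j := fun j hj => (hysupp j).2 (by omega)
  -- k positive
  have hk0 : 0 < k := by
    by_contra h
    have : ∑ i, x i = 0 := Finset.sum_eq_zero (fun i _ => hxz i (by omega))
    rw [hx1] at this; norm_num at this
  set Km := Finset.univ.filter (fun j : Fin m => (j : ℕ) < k) with hKm
  set Kn := Finset.univ.filter (fun i : Fin n => (i : ℕ) < k) with hKn
  set S := ∑ j ∈ Km, y j with hS
  have hm0 : 0 < m := by omega
  have hSpos : 0 < S := by
    apply Finset.sum_pos
    · exact fun j hj => hyk j (Finset.mem_filter.mp hj).2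
    · exact ⟨⟨0, hm0⟩, Finset.mem_filter.mpr ⟨Finset.mem_univ _, by simpa using hk0⟩⟩
  have hSy : S + ybar = 1 := by
    rw [hS, hybar, ← hy1]
    rw [← Finset.sum_filter_add_sum_filter_not Finset.univ (fun j : Fin m => (j : ℕ) < k) y]
    congr 1
    apply Finset.sum_congr _ (fun _ _ => rfl)
    ext j; simp only [Finset.mem_filter, Finset.mem_univ, true_and]; omega
  have hxsum1 : ∑ i ∈ Kn, x i = 1 := by
    rw [← hx1]
    symm
    rw [← Finset.sum_filter_add_sum_filter_not Finset.univ (fun i : Fin n => (i : ℕ) < k) x]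
    rw [← hKn]
    have : ∑ i ∈ Finset.univ.filter (fun i : Fin n => ¬ (i : ℕ) < k), x i = 0 :=
      Finset.sum_eq_zero (fun i hi => hxz i (Finset.mem_filter.mp hi).2)
    rw [this, add_zero]
  -- the x-reindex sum
  set f : ℕ → ℝ := fun i => if h : i < n then x ⟨i, h⟩ else 0 with hf
  have hxsumM : ∑ j ∈ Km, f (j : ℕ) = 1 := by
    rw [hKm, aux_range k m hkm f, ← aux_range k n (le_of_lt hkn) f, ← hxsum1]
    apply Finset.sum_congr rfl
    intro i hi
    have hik : (i : ℕ) < k := (Finset.mem_filter.mp hi).2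
    simp only [hf]
    rw [dif_pos i.isLt]
  have hfval : ∀ jn : ℕ, ∀ h : jn < n, f jn = x ⟨jn, h⟩ := by
    intro jn h; simp only [hf]; rw [dif_pos h]
  -- key sum : ∑_{j ∈ Km} α j * y j = v * S + (v*ybar - v₁)
  have hαsum : ∑ j ∈ Km, α j * y j = v * S + (v * ybar - v₁) := by
    have : ∑ j ∈ Km, α j * y j
        = ∑ j ∈ Km, (v * y j + f (j : ℕ) * (v * ybar - v₁)) := by
      apply Finset.sum_congr rfl
      intro j hj
      have hjk : (j : ℕ) < k := (Finset.mem_filter.mp hj).2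
      have hyj : y j ≠ 0 := ne_of_gt (hyk j hjk)
      rw [hα j hjk, hfval (j : ℕ) (by omega)]
      field_simp
    rw [this, Finset.sum_add_distrib, ← Finset.mul_sum, ← hS, ← Finset.sum_mul, hxsumM, one_mul]
  constructor
  · intro j hjl
    by_cases hjk : (j : ℕ) < k
    · have hAij : ∀ i : Fin n, A i j =
          if (i : ℕ) < k then (if (i : ℕ) = (j : ℕ) then a j else α j) else α j - z := by
        intro i; rw [hA]; simp [hjk]
      set j' : Fin n := ⟨(j : ℕ), by omega⟩ with hj'
      have hstep : ∑ i, x i * A i j = ∑ i ∈ Kn, x i * A i j := by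
        symm
        rw [← Finset.sum_filter_add_sum_filter_not Finset.univ (fun i : Fin n => (i : ℕ) < k)
          (fun i => x i * A i j), ← hKn]
        have : ∑ i ∈ Finset.univ.filter (fun i : Fin n => ¬ (i : ℕ) < k), x i * A i j = 0 :=
          Finset.sum_eq_zero (fun i hi => by rw [hxz i (Finset.mem_filter.mp hi).2, zero_mul])
        rw [this, add_zero]
      rw [hstep]
      have hstep2 : ∑ i ∈ Kn, x i * A i j
          = ∑ i ∈ Kn, (x i * α j + (if (i : ℕ) = (j : ℕ) then x i * (a j - α j) else 0)) := by
        apply Finset.sum_congr rfl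
        intro i hi
        have hik : (i : ℕ) < k := (Finset.mem_filter.mp hi).2
        rw [hAij i, if_pos hik]
        by_cases h : (i : ℕ) = (j : ℕ)
        · rw [if_pos h, if_pos h]; ring
        · rw [if_neg h, if_neg h]; ring
      rw [hstep2, Finset.sum_add_distrib, ← Finset.sum_mul, hxsum1, one_mul]
      have hsingle : ∑ i ∈ Kn, (if (i : ℕ) = (j : ℕ) then x i * (a j - α j) else 0)
          = x j' * (a j - α j) := by
        rw [Finset.sum_eq_single_of_mem j' (Finset.mem_filter.mpr ⟨Finset.mem_univ _, hjk⟩)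
          (fun i _ hne => if_neg (fun h => hne (Fin.ext h)))]
        simp
      rw [hsingle, ha j hjk, hα j hjk]
      have : x j' = x ⟨(j : ℕ), by omega⟩ := rfl
      rw [← this]
      ring
    · have hAij : ∀ i : Fin n, A i j = v := by
        intro i; rw [hA]; simp [hjk]
      simp only [hAij, ← Finset.sum_mul, hx1, one_mul]
  · intro i
    have hsplit : ∑ j, A i j * y j
        = ∑ j ∈ Km, A i j * y j + ∑ j ∈ Finset.univ.filter (fun j : Fin m => ¬ (j : ℕ) < k), A i j * y j := by
      rw [← Finset.sum_filter_add_sum_filter_not Finset.univ (fun j : Fin m => (j : ℕ) < k)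
        (fun j => A i j * y j)]
    have hright : ∑ j ∈ Finset.univ.filter (fun j : Fin m => ¬ (j : ℕ) < k), A i j * y j
        = v * ybar := by
      have : ∀ j ∈ Finset.univ.filter (fun j : Fin m => ¬ (j : ℕ) < k), A i j * y j = v * y j := by
        intro j hj
        have hjk : ¬ (j : ℕ) < k := (Finset.mem_filter.mp hj).2
        rw [hA]
        by_cases h : (i : ℕ) < k <;> simp [h, hjk]
      rw [Finset.sum_congr rfl this, ← Finset.mul_sum, hybar]
      congr 1
      apply Finset.sum_congr _ (fun _ _ => rfl)
      ext j; simp only [Finset.mem_filter, Finset.mem_univ, true_and]; omega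
    rw [hsplit, hright]
    by_cases hik : (i : ℕ) < k
    · set i' : Fin m := ⟨(i : ℕ), by omega⟩ with hi'
      have hstep2 : ∑ j ∈ Km, A i j * y j
          = ∑ j ∈ Km, (α j * y j + (if (i : ℕ) = (j : ℕ) then (a j - α j) * y j else 0)) := by
        apply Finset.sum_congr rfl
        intro j hj
        have hjk : (j : ℕ) < k := (Finset.mem_filter.mp hj).2
        rw [hA, if_pos hik, if_pos hjk]
        by_cases h : (i : ℕ) = (j : ℕ)
        · rw [if_pos h, if_pos h]; ring
        · rw [if_neg h, if_neg h]; ring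
      rw [hstep2, Finset.sum_add_distrib, hαsum]
      have hsingle : ∑ j ∈ Km, (if (i : ℕ) = (j : ℕ) then (a j - α j) * y j else 0)
          = -(v * ybar - v₁) := by
        rw [Finset.sum_eq_single_of_mem i' (Finset.mem_filter.mpr ⟨Finset.mem_univ _, hik⟩)
          (fun j _ hne => if_neg (fun h => hne (Fin.ext h.symm)))]
        have hii : (i : ℕ) = ((i' : Fin m) : ℕ) := rfl
        rw [if_pos hii, ha i' hik]
        have hyi : y i' ≠ 0 := ne_of_gt (hyk i' hik)
        field_simp
        ring
      rw [hsingle]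
      nlinarith [hSy]
    · have hstep2 : ∑ j ∈ Km, A i j * y j = ∑ j ∈ Km, (α j * y j - z * y j) := by
        apply Finset.sum_congr rfl
        intro j hj
        have hjk : (j : ℕ) < k := (Finset.mem_filter.mp hj).2
        rw [hA, if_neg hik, if_pos hjk]
        ring
      rw [hstep2, Finset.sum_sub_distrib, hαsum, ← Finset.mul_sum, ← hS, hz]
      rw [div_mul_cancel₀ _ (ne_of_gt hSpos)]
      nlinarith [hSy]
end
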